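/- Let Λ be a finite measure on (0,1], ν(dx) = x⁻²Λ(dx), and for n ≥ 2 define δ(n) := -n ∫₀¹ log(1 - (1/n)[nx - 1 + (1-x)ⁿ]) ν(dx) and λ_{n,k} := ∫₀¹ x^k (1-x)^{n-k} x⁻² Λ(dx). Then δ(n)/n ≤ ∑_{k=2}^{n} (-log((n-k+1)/n)) C(n,k) λ_{n,k}. -/

import Mathlib

open MeasureTheory Real Set Finset
open scoped ENNReal

private lemma sum_w (x : ℝ) (n : ℕ) :
    ∑ k ∈ Finset.range (n+1), (n.choose k : ℝ) * x ^ k * (1 - x) ^ (n - k) = 1 := by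
  have h := add_pow x (1 - x) n
  simp only [add_sub_cancel, one_pow] at h
  calc ∑ k ∈ Finset.range (n+1), (n.choose k : ℝ) * x ^ k * (1 - x) ^ (n - k)
      = ∑ k ∈ Finset.range (n+1), x ^ k * (1 - x) ^ (n - k) * (n.choose k : ℝ) :=
        Finset.sum_congr rfl fun k _ => by ring
    _ = 1 := h.symm

private lemma sum_kw (x : ℝ) (n : ℕ) (hn : 1 ≤ n) :
    ∑ k ∈ Finset.range (n+1), (k : ℝ) * ((n.choose k : ℝ) * x ^ k * (1 - x) ^ (n - k))
      = n * x := by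
  rw [Finset.sum_range_succ']
  simp only [Nat.cast_zero, zero_mul, add_zero]
  push_cast
  have hcast : ∀ j : ℕ, ((j : ℝ) + 1) * (n.choose (j+1) : ℝ) = (n : ℝ) * ((n-1).choose j : ℝ) := by
    intro j
    have h := Nat.add_one_mul_choose_eq (n - 1) j
    have hs : n - 1 + 1 = n := Nat.succ_pred_eq_of_pos hn
    rw [hs] at h
    have : ((n * (n-1).choose j : ℕ) : ℝ) = ((n.choose (j+1) * (j+1) : ℕ) : ℝ) := by
      exact_mod_cast congrArg Nat.cast h
    push_cast at this
    linarith
  have key : ∀ j ∈ Finset.range n,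
      ((j:ℝ)+1) * ((n.choose (j+1) : ℝ) * x ^ (j+1) * (1 - x) ^ (n - (j+1)))
        = (n : ℝ) * x * (((n-1).choose j : ℝ) * x ^ j * (1 - x) ^ ((n-1) - j)) := by
    intro j hj
    rw [Finset.mem_range] at hj
    have hsub : n - (j+1) = (n-1) - j := by omega
    rw [hsub]
    linear_combination (x ^ (j+1) * (1 - x) ^ ((n-1) - j)) * hcast j
  calc ∑ j ∈ Finset.range n, ((j:ℝ)+1) * ((n.choose (j+1) : ℝ) * x ^ (j+1) * (1 - x) ^ (n - (j+1)))
      = ∑ j ∈ Finset.range n, (n : ℝ) * x * (((n-1).choose j : ℝ) * x ^ j * (1 - x) ^ ((n-1) - j)) := by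
        refine Finset.sum_congr rfl key
    _ = (n : ℝ) * x * ∑ j ∈ Finset.range ((n-1)+1), (((n-1).choose j : ℝ) * x ^ j * (1 - x) ^ ((n-1) - j)) := by
        rw [← Finset.mul_sum]
        have h : (n-1)+1 = n := by omega
        rw [h]
    _ = n * x := by rw [sum_w]; ring

theorem stmt3 (Λ : Measure ℝ) [IsFiniteMeasure Λ] (hsupp : Λ (Set.Ioc 0 1)ᶜ = 0)
    (n : ℕ) (hn : 2 ≤ n) :
    (∫⁻ x in Set.Ioc 0 1,
        ENNReal.ofReal ((-Real.log (1 - (1 / (n : ℝ)) * (n * x - 1 + (1 - x) ^ n))) / x ^ 2) ∂Λ)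
      ≤ ∑ k ∈ Finset.Icc 2 n,
          ENNReal.ofReal (-Real.log (((n - k + 1 : ℕ) : ℝ) / n)) * (n.choose k : ℝ≥0∞) *
            (∫⁻ x in Set.Ioc 0 1, ENNReal.ofReal (x ^ (k - 2) * (1 - x) ^ (n - k)) ∂Λ) := by
  have hn0 : (0:ℝ) < n := by positivity
  -- pointwise bound
  have hpt : ∀ x ∈ Set.Ioc (0:ℝ) 1,
      ENNReal.ofReal ((-Real.log (1 - (1 / (n : ℝ)) * (n * x - 1 + (1 - x) ^ n))) / x ^ 2)
        ≤ ∑ k ∈ Finset.Icc 2 n,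
            ENNReal.ofReal (-Real.log (((n - k + 1 : ℕ) : ℝ) / n)) * (n.choose k : ℝ≥0∞) *
              ENNReal.ofReal (x ^ (k - 2) * (1 - x) ^ (n - k)) := by
    intro x hx
    obtain ⟨hx0, hx1⟩ := hx
    set w : ℕ → ℝ := fun k => (n.choose k : ℝ) * x ^ k * (1 - x) ^ (n - k) with hw
    set p : ℕ → ℝ := fun k => if k ≤ 1 then 1 else ((n:ℝ) - k + 1) / n with hp
    have hwnn : ∀ k ∈ Finset.range (n+1), 0 ≤ w k := by
      intro k _
      have : (0:ℝ) ≤ 1 - x := by linarith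
      positivity
    have hw1 : ∑ k ∈ Finset.range (n+1), w k = 1 := sum_w x n
    have hpmem : ∀ k ∈ Finset.range (n+1), p k ∈ Set.Ioi (0:ℝ) := by
      intro k hk
      rw [Finset.mem_range] at hk
      simp only [hp, Set.mem_Ioi]
      split
      · norm_num
      · next h =>
        have hkn : (k:ℝ) ≤ n := by exact_mod_cast Nat.lt_succ_iff.mp hk
        apply div_pos (by linarith) hn0
    -- Jensen
    have hjen := strictConcaveOn_log_Ioi.concaveOn.le_map_sum hwnn hw1 hpmem
    simp only [smul_eq_mul] at hjen
    -- compute the mean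
    have hmean : ∑ k ∈ Finset.range (n+1), w k * p k
        = 1 - (1 / (n : ℝ)) * (n * x - 1 + (1 - x) ^ n) := by
      have hsplit : ∀ k ∈ Finset.range (n+1), w k * p k
          = w k * (((n:ℝ) - k + 1) / n)
            + (if k = 0 then -(1-x)^n/n else 0) + (if k = 1 then 0 else 0) := by
        intro k hk
        simp only [hp]
        rcases Nat.lt_or_ge k 2 with h2 | h2
        · have hne : (n:ℝ) ≠ 0 := ne_of_gt (by positivity)
          interval_cases k
          · simp only [hp, hw]
            norm_num
            first
            | (field_simp; try ring)
            | skip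
          · simp only [hp, hw]
            norm_num
            first
            | (field_simp; try ring)
            | skip
        · have : ¬ k ≤ 1 := by omega
          simp [this, hk]
          intro hk0; omega
      rw [Finset.sum_congr rfl hsplit]
      rw [Finset.sum_add_distrib, Finset.sum_add_distrib]
      have h0 : ∑ k ∈ Finset.range (n+1), (if k = 0 then -(1-x)^n/n else 0) = -(1-x)^n/n := by
        rw [Finset.sum_ite_eq' (Finset.range (n+1)) 0]
        simp
      have h1 : (∑ k ∈ Finset.range (n+1), (if k = 1 then (0:ℝ) else 0)) = 0 := by simp
      rw [h0, h1]
      have hlin : ∑ k ∈ Finset.range (n+1), w k * (((n:ℝ) - k + 1) / n)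
          = ((n:ℝ) + 1 - n * x) / n := by
        have : ∀ k, w k * (((n:ℝ) - k + 1) / n)
            = (((n:ℝ)+1) * w k - (k:ℝ) * w k) / n := by intro k; ring
        rw [Finset.sum_congr rfl (fun k _ => this k)]
        rw [← Finset.sum_div, Finset.sum_sub_distrib, ← Finset.mul_sum, hw1,
          sum_kw x n (by omega)]
        ring
      rw [hlin]
      field_simp
      ring
    rw [hmean] at hjen
    -- turn into -log bound
    have hneg : -Real.log (1 - (1 / (n : ℝ)) * (n * x - 1 + (1 - x) ^ n))
        ≤ ∑ k ∈ Finset.range (n+1), w k * (-Real.log (p k)) := by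
      have : ∑ k ∈ Finset.range (n+1), w k * (-Real.log (p k))
          = -∑ k ∈ Finset.range (n+1), w k * Real.log (p k) := by
        rw [← Finset.sum_neg_distrib]
        exact Finset.sum_congr rfl fun k _ => by ring
      rw [this]
      linarith
    -- restrict sum to Icc 2 n
    have hsub : Finset.Icc 2 n ⊆ Finset.range (n+1) := by
      intro k hk
      rw [Finset.mem_Icc] at hk
      rw [Finset.mem_range]
      omega
    have hzero : ∀ k ∈ Finset.range (n+1), k ∉ Finset.Icc 2 n →
        w k * (-Real.log (p k)) = 0 := by
      intro k hk hk2
      rw [Finset.mem_range] at hk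
      rw [Finset.mem_Icc] at hk2
      have : k ≤ 1 := by omega
      simp [hp, this]
    rw [← Finset.sum_subset hsub hzero] at hneg
    -- rewrite p on Icc 2 n
    have hform : ∀ k ∈ Finset.Icc 2 n, w k * (-Real.log (p k))
        = (-Real.log (((n - k + 1 : ℕ) : ℝ) / n)) * (n.choose k : ℝ) * (x ^ (k-2) * (1 - x) ^ (n - k)) * x ^ 2 := by
      intro k hk
      rw [Finset.mem_Icc] at hk
      have h2 : ¬ k ≤ 1 := by omega
      have hcast : ((n - k + 1 : ℕ) : ℝ) = (n:ℝ) - k + 1 := by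
        push_cast [Nat.cast_sub hk.2]
        ring
      have hxp : x ^ (k-2) * x ^ 2 = x ^ k := by
        rw [← pow_add]
        congr 1
        omega
      simp only [hp, h2, if_false, hw, hcast]
      rw [← hxp]
      ring
    rw [Finset.sum_congr rfl hform] at hneg
    -- nonnegativity facts
    have hck : ∀ k ∈ Finset.Icc 2 n, 0 ≤ -Real.log (((n - k + 1 : ℕ) : ℝ) / n) := by
      intro k hk
      rw [Finset.mem_Icc] at hk
      have h1 : ((n - k + 1 : ℕ) : ℝ) / n ≤ 1 := by
        rw [div_le_one hn0]
        exact_mod_cast Nat.le_of_lt_succ (by omega)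
      have h0 : (0:ℝ) ≤ ((n - k + 1 : ℕ) : ℝ) / n := by positivity
      simpa using Real.log_nonpos h0 h1
    have hgnn : ∀ k, (0:ℝ) ≤ x ^ (k - 2) * (1 - x) ^ (n - k) := by
      intro k
      have : (0:ℝ) ≤ 1 - x := by linarith
      positivity
    have hterm : ∀ k ∈ Finset.Icc 2 n,
        ENNReal.ofReal (-Real.log (((n - k + 1 : ℕ) : ℝ) / n)) * (n.choose k : ℝ≥0∞) *
            ENNReal.ofReal (x ^ (k - 2) * (1 - x) ^ (n - k))
          = ENNReal.ofReal ((-Real.log (((n - k + 1 : ℕ) : ℝ) / n)) * (n.choose k : ℝ) *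
              (x ^ (k - 2) * (1 - x) ^ (n - k))) := by
      intro k hk
      rw [ENNReal.ofReal_mul (mul_nonneg (hck k hk) (Nat.cast_nonneg _)),
        ENNReal.ofReal_mul (hck k hk), ENNReal.ofReal_natCast]
    rw [Finset.sum_congr rfl hterm, ← ENNReal.ofReal_sum_of_nonneg
      (fun k hk => by have := hck k hk; have := hgnn k; positivity)]
    apply ENNReal.ofReal_le_ofReal
    rw [div_le_iff₀ (by positivity : (0:ℝ) < x ^ 2)]
    calc -Real.log (1 - (1 / (n : ℝ)) * (n * x - 1 + (1 - x) ^ n))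
        ≤ ∑ k ∈ Finset.Icc 2 n,
            (-Real.log (((n - k + 1 : ℕ) : ℝ) / n)) * (n.choose k : ℝ) *
              (x ^ (k-2) * (1 - x) ^ (n - k)) * x ^ 2 := hneg
      _ = (∑ k ∈ Finset.Icc 2 n,
            (-Real.log (((n - k + 1 : ℕ) : ℝ) / n)) * (n.choose k : ℝ) *
              (x ^ (k-2) * (1 - x) ^ (n - k))) * x ^ 2 := by
          rw [Finset.sum_mul]
  -- integrate the pointwise bound
  have hmeas : ∀ k : ℕ, Measurable fun x : ℝ =>
      ENNReal.ofReal (x ^ (k - 2) * (1 - x) ^ (n - k)) := by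
    intro k
    exact ENNReal.measurable_ofReal.comp
      (((measurable_id.pow_const _).mul ((measurable_const.sub measurable_id).pow_const _)))
  calc (∫⁻ x in Set.Ioc 0 1,
        ENNReal.ofReal ((-Real.log (1 - (1 / (n : ℝ)) * (n * x - 1 + (1 - x) ^ n))) / x ^ 2) ∂Λ)
      ≤ ∫⁻ x in Set.Ioc 0 1, ∑ k ∈ Finset.Icc 2 n,
          ENNReal.ofReal (-Real.log (((n - k + 1 : ℕ) : ℝ) / n)) * (n.choose k : ℝ≥0∞) *
            ENNReal.ofReal (x ^ (k - 2) * (1 - x) ^ (n - k)) ∂Λ := by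
        refine setLIntegral_mono (Finset.measurable_sum _ fun k _ => ?_) hpt
        exact (measurable_const.mul (hmeas k))
    _ = ∑ k ∈ Finset.Icc 2 n, ∫⁻ x in Set.Ioc 0 1,
          ENNReal.ofReal (-Real.log (((n - k + 1 : ℕ) : ℝ) / n)) * (n.choose k : ℝ≥0∞) *
            ENNReal.ofReal (x ^ (k - 2) * (1 - x) ^ (n - k)) ∂Λ := by
        exact lintegral_finset_sum' _ fun k _ =>
          (measurable_const.mul (hmeas k)).aemeasurable
    _ = ∑ k ∈ Finset.Icc 2 n,
          ENNReal.ofReal (-Real.log (((n - k + 1 : ℕ) : ℝ) / n)) * (n.choose k : ℝ≥0∞) *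
            (∫⁻ x in Set.Ioc 0 1, ENNReal.ofReal (x ^ (k - 2) * (1 - x) ^ (n - k)) ∂Λ) := by
        refine Finset.sum_congr rfl fun k _ => ?_
        exact lintegral_const_mul'' _ (hmeas k).aemeasurable
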